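/- Let E, F, G be normed L-spaces, ρ : E × F → G an L-bounded bilinear operator, and R : E ⊗_L F → G the associated linear operator. Then R is L-bounded and ‖R_∞‖ = ‖ρ_∞‖, where E ⊗_L F carries the L-norm ‖U‖_L = inf{Σ ‖a_k‖‖u_k‖‖v_k‖ : U = Σ a_k·(u_k ◇ v_k)}. -/

import Mathlib

open TensorProduct

/-- The extended diamond operation `(ξ ⊗ x) ◇ (η ⊗ y) = (ξ ◇ η) ⊗ (x ⊗ y)`. -/
noncomputable def diamondT {L E F : Type*}
    [AddCommGroup L] [Module ℂ L] [AddCommGroup E] [Module ℂ E]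
    [AddCommGroup F] [Module ℂ F]
    (d : L →ₗ[ℂ] L →ₗ[ℂ] L) (u : L ⊗[ℂ] E) (v : L ⊗[ℂ] F) : L ⊗[ℂ] (E ⊗[ℂ] F) :=
  TensorProduct.map (TensorProduct.lift d) LinearMap.id
    (TensorProduct.tensorTensorTensorComm ℂ L E L F (u ⊗ₜ[ℂ] v))

/-- The amplification `ρ_∞(ξ⊗x, η⊗y) = (ξ◇η) ⊗ ρ(x,y)` of a bilinear operator. -/
noncomputable def ampBil {L E F G : Type*}
    [AddCommGroup L] [Module ℂ L] [AddCommGroup E] [Module ℂ E]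
    [AddCommGroup F] [Module ℂ F] [AddCommGroup G] [Module ℂ G]
    (d : L →ₗ[ℂ] L →ₗ[ℂ] L) (ρ : E →ₗ[ℂ] F →ₗ[ℂ] G)
    (u : L ⊗[ℂ] E) (v : L ⊗[ℂ] F) : L ⊗[ℂ] G :=
  TensorProduct.map (TensorProduct.lift d) (TensorProduct.lift ρ)
    (TensorProduct.tensorTensorTensorComm ℂ L E L F (u ⊗ₜ[ℂ] v))

/-- The general `L`-tensor norm on `E ⊗_L F`. -/
noncomputable def genLNorm {L E F : Type*}
    [NormedAddCommGroup L] [NormedSpace ℂ L] [AddCommGroup E] [Module ℂ E]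
    [AddCommGroup F] [Module ℂ F]
    (d : L →ₗ[ℂ] L →ₗ[ℂ] L) (NE : L ⊗[ℂ] E → ℝ) (NF : L ⊗[ℂ] F → ℝ)
    (U : L ⊗[ℂ] (E ⊗[ℂ] F)) : ℝ :=
  sInf {r : ℝ | ∃ (n : ℕ) (a : Fin n → (L →L[ℂ] L))
      (u : Fin n → L ⊗[ℂ] E) (v : Fin n → L ⊗[ℂ] F),
    U = ∑ k, LinearMap.rTensor (E ⊗[ℂ] F) ((a k : L →ₗ[ℂ] L)) (diamondT d (u k) (v k)) ∧
    r = ∑ k, ‖a k‖ * NE (u k) * NF (v k)}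


lemma nnonneg {M : Type*} [AddCommGroup M] [Module ℂ M] (N : M → ℝ)
    (h0 : N 0 = 0) (hadd : ∀ a b, N (a+b) ≤ N a + N b)
    (hsmul : ∀ (c : ℂ) u, N (c • u) = ‖c‖ * N u) (u : M) : 0 ≤ N u := by
  have h1 : N (-u) = N u := by
    have := hsmul (-1) u; simpa using this
  have h2 := hadd u (-u)
  rw [add_neg_cancel, h0, h1] at h2
  linarith

lemma nsum {M : Type*} [AddCommGroup M] (N : M → ℝ)
    (h0 : N 0 = 0) (hadd : ∀ a b, N (a+b) ≤ N a + N b)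
    (n : ℕ) (f : Fin n → M) : N (∑ i, f i) ≤ ∑ i, N (f i) := by
  induction n with
  | zero => simp [h0]
  | succ n ih =>
    rw [Fin.sum_univ_castSucc, Fin.sum_univ_castSucc]
    exact (hadd _ _).trans (add_le_add (ih _) le_rfl)

lemma amp_eq {L E F G : Type*}
    [AddCommGroup L] [Module ℂ L] [AddCommGroup E] [Module ℂ E]
    [AddCommGroup F] [Module ℂ F] [AddCommGroup G] [Module ℂ G]
    (d : L →ₗ[ℂ] L →ₗ[ℂ] L) (ρ : E →ₗ[ℂ] F →ₗ[ℂ] G)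
    (u : L ⊗[ℂ] E) (v : L ⊗[ℂ] F) :
    LinearMap.lTensor L (TensorProduct.lift ρ) (diamondT d u v) = ampBil d ρ u v := by
  unfold diamondT ampBil
  rw [LinearMap.lTensor, ← LinearMap.comp_apply, ← TensorProduct.map_comp]
  simp

lemma lt_rt {L A B : Type*}
    [AddCommGroup L] [Module ℂ L] [AddCommGroup A] [Module ℂ A]
    [AddCommGroup B] [Module ℂ B]
    (g : A →ₗ[ℂ] B) (a : L →ₗ[ℂ] L) (x : L ⊗[ℂ] A) :
    LinearMap.lTensor L g (LinearMap.rTensor A a x)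
      = LinearMap.rTensor B a (LinearMap.lTensor L g x) := by
  rw [← LinearMap.comp_apply, ← LinearMap.comp_apply,
    LinearMap.lTensor_comp_rTensor, LinearMap.rTensor_comp_lTensor]

lemma diamondT_tmul {L E F : Type*}
    [AddCommGroup L] [Module ℂ L] [AddCommGroup E] [Module ℂ E]
    [AddCommGroup F] [Module ℂ F]
    (d : L →ₗ[ℂ] L →ₗ[ℂ] L) (ξ η : L) (x : E) (y : F) :
    diamondT d (ξ ⊗ₜ[ℂ] x) (η ⊗ₜ[ℂ] y) = (d ξ η) ⊗ₜ[ℂ] (x ⊗ₜ[ℂ] y) := by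
  unfold diamondT
  rw [tensorTensorTensorComm_tmul]
  simp

/-- For an `L`-bounded bilinear operator `ρ : E × F → G`, the associated
linear operator `R : E ⊗_L F → G` is `L`-bounded with `‖R_∞‖ = ‖ρ_∞‖` (stated as:
`ρ_∞` and `R_∞` have exactly the same bounds). -/
theorem associated_operator_L_bounded
    (L E F G : Type*) [NormedAddCommGroup L] [NormedSpace ℂ L] [Nontrivial L]
    [NormedAddCommGroup E] [NormedSpace ℂ E]
    [NormedAddCommGroup F] [NormedSpace ℂ F]
    [NormedAddCommGroup G] [NormedSpace ℂ G]
    (d : L →ₗ[ℂ] L →ₗ[ℂ] L) (hd : ∀ ξ η : L, ‖d ξ η‖ = ‖ξ‖ * ‖η‖)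
    (NE : L ⊗[ℂ] E → ℝ) (NF : L ⊗[ℂ] F → ℝ) (NG : L ⊗[ℂ] G → ℝ)
    (hNE0 : ∀ u, NE u = 0 ↔ u = 0)
    (hNEadd : ∀ u v, NE (u + v) ≤ NE u + NE v)
    (hNEsmul : ∀ (c : ℂ) u, NE (c • u) = ‖c‖ * NE u)
    (hNEcontr : ∀ (a : L →L[ℂ] L) u,
      NE (LinearMap.rTensor E (a : L →ₗ[ℂ] L) u) ≤ ‖a‖ * NE u)
    (hNEund : ∀ (ξ : L) (x : E), ‖ξ‖ = 1 → NE (ξ ⊗ₜ[ℂ] x) = ‖x‖)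
    (hNF0 : ∀ v, NF v = 0 ↔ v = 0)
    (hNFadd : ∀ u v, NF (u + v) ≤ NF u + NF v)
    (hNFsmul : ∀ (c : ℂ) v, NF (c • v) = ‖c‖ * NF v)
    (hNFcontr : ∀ (a : L →L[ℂ] L) v,
      NF (LinearMap.rTensor F (a : L →ₗ[ℂ] L) v) ≤ ‖a‖ * NF v)
    (hNFund : ∀ (ξ : L) (y : F), ‖ξ‖ = 1 → NF (ξ ⊗ₜ[ℂ] y) = ‖y‖)
    (hNG0 : ∀ w, NG w = 0 ↔ w = 0)
    (hNGadd : ∀ w w', NG (w + w') ≤ NG w + NG w')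
    (hNGsmul : ∀ (c : ℂ) w, NG (c • w) = ‖c‖ * NG w)
    (hNGcontr : ∀ (a : L →L[ℂ] L) w,
      NG (LinearMap.rTensor G (a : L →ₗ[ℂ] L) w) ≤ ‖a‖ * NG w)
    (hNGund : ∀ (ξ : L) (z : G), ‖ξ‖ = 1 → NG (ξ ⊗ₜ[ℂ] z) = ‖z‖)
    (ρ : E →ₗ[ℂ] F →ₗ[ℂ] G)
    (hbdd : ∃ C : ℝ, 0 ≤ C ∧ ∀ (u : L ⊗[ℂ] E) (v : L ⊗[ℂ] F),
      NG (ampBil d ρ u v) ≤ C * (NE u * NF v)) :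
    ∀ C : ℝ, 0 ≤ C →
      ((∀ (u : L ⊗[ℂ] E) (v : L ⊗[ℂ] F), NG (ampBil d ρ u v) ≤ C * (NE u * NF v)) ↔
       (∀ U : L ⊗[ℂ] (E ⊗[ℂ] F),
          NG (LinearMap.lTensor L (TensorProduct.lift ρ) U) ≤ C * genLNorm d NE NF U)) := by
  intro C hC
  -- notation
  set R := TensorProduct.lift ρ with hR
  have hNE_0 : NE 0 = 0 := (hNE0 0).mpr rfl
  have hNF_0 : NF 0 = 0 := (hNF0 0).mpr rfl
  have hNG_0 : NG 0 = 0 := (hNG0 0).mpr rfl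
  have hNEpos := nnonneg NE hNE_0 hNEadd hNEsmul
  have hNFpos := nnonneg NF hNF_0 hNFadd hNFsmul
  have hNGpos := nnonneg NG hNG_0 hNGadd hNGsmul
  -- representation set
  set S : (L ⊗[ℂ] (E ⊗[ℂ] F)) → Set ℝ := fun U =>
    {r : ℝ | ∃ (n : ℕ) (a : Fin n → (L →L[ℂ] L))
        (u : Fin n → L ⊗[ℂ] E) (v : Fin n → L ⊗[ℂ] F),
      U = ∑ k, LinearMap.rTensor (E ⊗[ℂ] F) ((a k : L →ₗ[ℂ] L)) (diamondT d (u k) (v k)) ∧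
      r = ∑ k, ‖a k‖ * NE (u k) * NF (v k)} with hS
  have hgen : ∀ U, genLNorm d NE NF U = sInf (S U) := fun _ => rfl
  -- every element has a representation
  have hP : ∀ U : L ⊗[ℂ] (E ⊗[ℂ] F), ∃ (n : ℕ) (a : Fin n → (L →L[ℂ] L))
      (u : Fin n → L ⊗[ℂ] E) (v : Fin n → L ⊗[ℂ] F),
      U = ∑ k, LinearMap.rTensor (E ⊗[ℂ] F) ((a k : L →ₗ[ℂ] L)) (diamondT d (u k) (v k)) := by
    have hadd : ∀ U V : L ⊗[ℂ] (E ⊗[ℂ] F),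
        (∃ (n : ℕ) (a : Fin n → (L →L[ℂ] L)) (u : Fin n → L ⊗[ℂ] E) (v : Fin n → L ⊗[ℂ] F),
          U = ∑ k, LinearMap.rTensor (E ⊗[ℂ] F) ((a k : L →ₗ[ℂ] L)) (diamondT d (u k) (v k))) →
        (∃ (n : ℕ) (a : Fin n → (L →L[ℂ] L)) (u : Fin n → L ⊗[ℂ] E) (v : Fin n → L ⊗[ℂ] F),
          V = ∑ k, LinearMap.rTensor (E ⊗[ℂ] F) ((a k : L →ₗ[ℂ] L)) (diamondT d (u k) (v k))) →
        (∃ (n : ℕ) (a : Fin n → (L →L[ℂ] L)) (u : Fin n → L ⊗[ℂ] E) (v : Fin n → L ⊗[ℂ] F),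
          U + V = ∑ k, LinearMap.rTensor (E ⊗[ℂ] F) ((a k : L →ₗ[ℂ] L)) (diamondT d (u k) (v k))) := by
      rintro U V ⟨n, a, u, v, hU⟩ ⟨m, b, u', v', hV⟩
      refine ⟨n + m, Fin.append a b, Fin.append u u', Fin.append v v', ?_⟩
      rw [Fin.sum_univ_add]
      simp only [Fin.append_left, Fin.append_right]
      rw [hU, hV]
    -- elementary tensors ξ ⊗ (x ⊗ y)
    have helem : ∀ (ξ : L) (x : E) (y : F),
        ∃ (n : ℕ) (a : Fin n → (L →L[ℂ] L)) (u : Fin n → L ⊗[ℂ] E) (v : Fin n → L ⊗[ℂ] F),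
          ξ ⊗ₜ[ℂ] (x ⊗ₜ[ℂ] y)
            = ∑ k, LinearMap.rTensor (E ⊗[ℂ] F) ((a k : L →ₗ[ℂ] L)) (diamondT d (u k) (v k)) := by
      intro ξ x y
      obtain ⟨ξ₀, hξ₀⟩ := exists_ne (0 : L)
      set μ : L := d ξ₀ ξ₀ with hμdef
      have hμnorm : ‖μ‖ = ‖ξ₀‖ * ‖ξ₀‖ := hd ξ₀ ξ₀
      have hμ : μ ≠ 0 := by
        intro h
        rw [h, norm_zero] at hμnorm
        have := mul_self_eq_zero.mp hμnorm.symm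
        exact hξ₀ (norm_eq_zero.mp this)
      obtain ⟨g, hg1, hgμ0⟩ := exists_dual_vector ℂ μ (norm_ne_zero_iff.mpr hμ)
      have hgμ : g μ = (‖μ‖ : ℂ) := by exact_mod_cast hgμ0
      set a : L →L[ℂ] L := ((‖μ‖ : ℂ))⁻¹ • g.smulRight ξ with ha
      refine ⟨1, fun _ => a, fun _ => ξ₀ ⊗ₜ[ℂ] x, fun _ => ξ₀ ⊗ₜ[ℂ] y, ?_⟩
      rw [Fin.sum_univ_one, diamondT_tmul, ← hμdef]
      have haμ : a μ = ξ := by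
        rw [ha]
        simp only [ContinuousLinearMap.smul_apply, ContinuousLinearMap.smulRight_apply, hgμ,
          smul_smul]
        have hne : (‖μ‖ : ℂ) ≠ 0 := by exact_mod_cast (norm_ne_zero_iff.mpr hμ)
        rw [inv_mul_cancel₀ hne, one_smul]
      rw [LinearMap.rTensor_tmul]
      simp [haμ]
    intro U
    induction U with
    | zero => exact ⟨0, Fin.elim0, Fin.elim0, Fin.elim0, by simp⟩
    | tmul ξ w =>
      induction w with
      | zero => simpa using ⟨0, Fin.elim0, Fin.elim0, Fin.elim0, by simp⟩
      | tmul x y => exact helem ξ x y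
      | add w w' ih ih' =>
        rw [TensorProduct.tmul_add]
        exact hadd _ _ ih ih'
    | add U V ihU ihV => exact hadd _ _ ihU ihV
  constructor
  · -- forward
    intro h U
    -- bound on each representation
    have hbd : ∀ r ∈ S U, NG (LinearMap.lTensor L R U) ≤ C * r := by
      rintro r ⟨n, a, u, v, hU, hr⟩
      have e1 : LinearMap.lTensor L R U
          = ∑ k, LinearMap.rTensor G ((a k : L →ₗ[ℂ] L)) (ampBil d ρ (u k) (v k)) := by
        rw [hU, map_sum]
        exact Finset.sum_congr rfl fun k _ => by rw [lt_rt, amp_eq]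
      rw [e1]
      calc NG (∑ k, LinearMap.rTensor G ((a k : L →ₗ[ℂ] L)) (ampBil d ρ (u k) (v k)))
          ≤ ∑ k, NG (LinearMap.rTensor G ((a k : L →ₗ[ℂ] L)) (ampBil d ρ (u k) (v k))) :=
            nsum NG hNG_0 hNGadd n _
        _ ≤ ∑ k, ‖a k‖ * (C * (NE (u k) * NF (v k))) := by
            refine Finset.sum_le_sum fun k _ => ?_
            exact (hNGcontr (a k) _).trans
              (mul_le_mul_of_nonneg_left (h (u k) (v k)) (norm_nonneg _))
        _ = C * r := by rw [hr, Finset.mul_sum]; exact Finset.sum_congr rfl fun k _ => by ring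
    obtain ⟨n, a, u, v, hU⟩ := hP U
    have hmem : (∑ k, ‖a k‖ * NE (u k) * NF (v k)) ∈ S U := ⟨n, a, u, v, hU, rfl⟩
    rcases eq_or_lt_of_le hC with hC0 | hC0
    · have := hbd _ hmem
      rw [← hC0] at this ⊢
      simpa using this
    · rw [hgen]
      have hdiv : NG (LinearMap.lTensor L R U) / C ≤ sInf (S U) := by
        refine le_csInf ⟨_, hmem⟩ fun b hb => ?_
        rw [div_le_iff₀ hC0]
        calc NG (LinearMap.lTensor L R U) ≤ C * b := hbd b hb
          _ = b * C := mul_comm _ _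
      exact (div_le_iff₀' hC0).mp hdiv
  · -- backward
    intro h u v
    have key := h (diamondT d u v)
    rw [amp_eq] at key
    have hbdb : BddBelow (S (diamondT d u v)) := by
      refine ⟨0, ?_⟩
      rintro r ⟨n, a, u', v', -, hr⟩
      rw [hr]
      exact Finset.sum_nonneg fun k _ =>
        mul_nonneg (mul_nonneg (norm_nonneg _) (hNEpos _)) (hNFpos _)
    have hle : genLNorm d NE NF (diamondT d u v) ≤ NE u * NF v := by
      rw [hgen]
      have hmem : NE u * NF v ∈ S (diamondT d u v) := by
        refine ⟨1, fun _ => 1, fun _ => u, fun _ => v, ?_, ?_⟩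
        · rw [Fin.sum_univ_one]
          simp [ContinuousLinearMap.one_def]
        · rw [Fin.sum_univ_one, norm_one, one_mul]
      exact csInf_le hbdb hmem
    calc NG (ampBil d ρ u v) ≤ C * genLNorm d NE NF (diamondT d u v) := key
      _ ≤ C * (NE u * NF v) := mul_le_mul_of_nonneg_left hle hC
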